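/- Let u(x) = √(x(1−x)) for x ∈ (0,1), let v : (0,1) → (0,∞) be C² and concave, and define q(y) = x + x(1−x)v'(x)/v(x) with x = e^y/(1+e^y) for y ∈ ℝ. Then q(y)(1 − q(y)) − q'(y) = −(e^{2y}/(1+e^y)⁴) · v''(x)/v(x), where x = e^y/(1+e^y). -/

import Mathlib

theorem stmt_12 (v : ℝ → ℝ)
    (hv : ContDiffOn ℝ 2 v (Set.Ioo (0 : ℝ) 1))
    (hconc : ConcaveOn ℝ (Set.Ioo (0 : ℝ) 1) v)
    (hpos : ∀ x ∈ Set.Ioo (0 : ℝ) 1, 0 < v x)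
    (q : ℝ → ℝ)
    (hq : ∀ y : ℝ, q y =
      Real.exp y / (1 + Real.exp y)
        + (Real.exp y / (1 + Real.exp y)) * (1 - Real.exp y / (1 + Real.exp y))
          * deriv v (Real.exp y / (1 + Real.exp y))
          / v (Real.exp y / (1 + Real.exp y))) :
    ∀ y : ℝ,
      q y * (1 - q y) - deriv q y
        = -(Real.exp (2 * y) / (1 + Real.exp y) ^ 4)
            * deriv (deriv v) (Real.exp y / (1 + Real.exp y))
            / v (Real.exp y / (1 + Real.exp y)) := by
  intro y
  have hepos : (0:ℝ) < Real.exp y := Real.exp_pos y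
  have he : (0:ℝ) < 1 + Real.exp y := by positivity
  set X : ℝ := Real.exp y / (1 + Real.exp y) with hXdef
  have hXmem : X ∈ Set.Ioo (0:ℝ) 1 :=
    ⟨by positivity, by rw [hXdef, div_lt_one he]; linarith⟩
  have hvx : 0 < v X := hpos X hXmem
  have hvne : v X ≠ 0 := hvx.ne'
  have hdvCD : ContDiffOn ℝ 1 (deriv v) (Set.Ioo (0:ℝ) 1) := by
    have h := hv.deriv_of_isOpen (m := 1) isOpen_Ioo (by norm_num)
    simpa using h
  have hvdiff : HasDerivAt v (deriv v X) X :=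
    ((hv.contDiffAt (isOpen_Ioo.mem_nhds hXmem)).differentiableAt (by norm_num)).hasDerivAt
  have hdvdiff : HasDerivAt (deriv v) (deriv (deriv v) X) X :=
    ((hdvCD.contDiffAt (isOpen_Ioo.mem_nhds hXmem)).differentiableAt (by norm_num)).hasDerivAt
  have hc : HasDerivAt (fun t : ℝ => Real.exp t / (1 + Real.exp t)) (X * (1 - X)) y := by
    have h := (Real.hasDerivAt_exp y).div
      ((hasDerivAt_const y (1:ℝ)).add (Real.hasDerivAt_exp y)) he.ne'
    refine h.congr_deriv ?_
    simp only [Pi.add_apply]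
    rw [hXdef]
    field_simp
    ring
  set dvX := deriv v X with hdv
  set ddvX := deriv (deriv v) X with hddv
  have hF : HasDerivAt (fun t : ℝ => t + t * (1 - t) * deriv v t / v t)
      (1 + (((1 - 2*X) * dvX + X*(1-X)*ddvX) * v X - X*(1-X)*dvX * dvX) / (v X)^2) X := by
    have h1 : HasDerivAt (fun t : ℝ => t * (1 - t)) (1 - 2*X) X := by
      have h := (hasDerivAt_id X).mul ((hasDerivAt_id X).const_sub 1)
      refine h.congr_deriv ?_
      simp only [id_eq]
      ring
    have h3 := (h1.mul hdvdiff).div hvdiff hvne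
    have h4 := (hasDerivAt_id X).add h3
    refine h4.congr_deriv ?_
    rfl
  have hq' : HasDerivAt q
      (X*(1-X) * (1 + (((1 - 2*X) * dvX + X*(1-X)*ddvX) * v X - X*(1-X)*dvX*dvX) / (v X)^2)) y := by
    have hcomp := hF.comp y hc
    have hqe : q = (fun t : ℝ => t + t * (1 - t) * deriv v t / v t) ∘
        (fun t : ℝ => Real.exp t / (1 + Real.exp t)) := by
      funext z
      simp only [Function.comp]
      exact hq z
    rw [hqe]
    refine hcomp.congr_deriv ?_
    ring
  have hkey : Real.exp (2*y) / (1 + Real.exp y)^4 = (X*(1-X))^2 := by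
    rw [hXdef, show (2:ℝ)*y = y+y by ring, Real.exp_add]
    field_simp
    ring
  rw [hq'.deriv, hq y, ← hXdef, ← hdv, hkey]
  field_simp
  ring
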